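/- arXiv:2109.04754 — 2 statements merged into one kernel-verified Lean document; each statement's English description precedes it below -/
import Mathlib

section
/- Let k be a field, let M be a monoidal category, and let F, G : M ⥤ fdVect_k be monoidal functors into the category of finite-dimensional k-vector spaces. If F is non-degenerate, then any two monoidal natural transformations η, η' : F ⟶ G are equal. (Consequently, a monoidal natural isomorphism F ≅ G, if it exists, is unique.) -/
/-!
STATEMENT 0: Let `k` be a field, `M` a monoidal category, and `F, G : M ⥤ fdVect_k`
monoidal functors into the category of finite-dimensional `k`-vector spaces.
If `F` is non-degenerate, then any two monoidal natural transformations `η, η' : F ⟶ G`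
are equal.
-/

open CategoryTheory MonoidalCategory Functor.LaxMonoidal

universe u v u'

/-- The element `1 : k` of the tensor unit of `FGModuleCat k`. -/
noncomputable def FGModuleCat.unitOne (k : Type u) [Field k] : 𝟙_ (FGModuleCat k) := (1 : k)

/-- A monoidal functor into `FGModuleCat k` is non-degenerate if, for every object `X`,
the vector space `F.obj X` is spanned by the vectors `F.map f (ε_F 1)`
for `f : 𝟙_ M ⟶ X` a morphism in `M`. -/
def CategoryTheory.Functor.Nondegenerate {k : Type u} [Field k]
    {M : Type u'} [Category.{v} M] [MonoidalCategory M]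
    (F : M ⥤ FGModuleCat k) [F.Monoidal] : Prop :=
  ∀ X : M, Submodule.span k
    {v : F.obj X | ∃ f : 𝟙_ M ⟶ X, v = F.map f (ε F (FGModuleCat.unitOne k))} = ⊤

/-- Any two monoidal natural transformations out of a non-degenerate monoidal functor
into `fdVect_k` (towards a fixed monoidal functor `G`) are equal. -/
theorem monoidalNatTrans_unique_of_nondegenerate
    {k : Type u} [Field k] {M : Type u'} [Category.{v} M] [MonoidalCategory M]
    (F G : M ⥤ FGModuleCat k) [F.Monoidal] [G.Monoidal]
    (hF : F.Nondegenerate)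
    (η η' : F ⟶ G) [NatTrans.IsMonoidal η] [NatTrans.IsMonoidal η'] :
    η = η' := by
  ext X : 2
  apply ConcreteCategory.hom_injective
  apply LinearMap.ext_on (hF X)
  rintro v ⟨f, rfl⟩
  have key : ∀ (θ : F ⟶ G) [NatTrans.IsMonoidal θ],
      (θ.app X) (F.map f (ε F (FGModuleCat.unitOne k))) =
        G.map f (ε G (FGModuleCat.unitOne k)) := by
    intro θ _
    have h1 := congrArg (fun (g : F.obj (𝟙_ M) ⟶ G.obj X) => g (ε F (FGModuleCat.unitOne k)))
      (θ.naturality f)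
    have h2 := congrArg (fun (g : 𝟙_ (FGModuleCat k) ⟶ G.obj (𝟙_ M)) =>
      g (FGModuleCat.unitOne k)) (NatTrans.IsMonoidal.unit (τ := θ))
    exact h1.trans (congrArg (G.map f) h2)
  rw [key η, key η']
end

section
/- (Key technical lemma for the comparison of TQFTs.) Let k be a field, let M be a rigid monoidal category, and let F, G : M ⥤ fdVect_k be monoidal functors into the category of finite-dimensional k-vector spaces. Suppose that: (i) F is non-degenerate; (ii) for every object X of M one has dim_k F(X) ≥ dim_k G(X); and (iii) F and G agree on endomorphisms of the unit object, i.e. for every φ : 𝟙 ⟶ 𝟙 in M one has ε_F⁻¹ ∘ F(φ) ∘ ε_F = ε_G⁻¹ ∘ G(φ) ∘ ε_G as linear endomorphisms of k. Then there exists a unique monoidal natural isomorphism between F and G. -/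
/-!
STATEMENT 3 (Key technical lemma): Let `k` be a field, `M` a rigid monoidal
category, and `F, G : M ⥤ fdVect_k` monoidal functors such that (i) `F` is
non-degenerate, (ii) `dim_k F(X) ≥ dim_k G(X)` for all `X`, and (iii) `F` and `G`
agree on endomorphisms of the unit object.  Then there exists a unique monoidal
natural isomorphism between `F` and `G`.
-/

open CategoryTheory MonoidalCategory Functor.LaxMonoidal

universe u v u'

/-! ### Auxiliary material -/

namespace TQFTCompare

open Functor.OplaxMonoidal

section CatLemmas

universe w₁ w₂ x₁ x₂

variable {C : Type w₁} [Category.{x₁} C] [MonoidalCategory C]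
  {D : Type w₂} [Category.{x₂} D] [MonoidalCategory D]
  (F : C ⥤ D) [F.Monoidal]

lemma mapped_zigzag (X Y : C) [ExactPairing X Y] :
    (ε F ≫ F.map (η_ X Y) ≫ δ F X Y) ▷ F.obj X ≫ (α_ (F.obj X) (F.obj Y) (F.obj X)).hom ≫
      F.obj X ◁ (μ F Y X ≫ F.map (ε_ X Y) ≫ η F) =
    (λ_ (F.obj X)).hom ≫ (ρ_ (F.obj X)).inv := by
  have h1 : δ F X Y ▷ F.obj X ≫ (α_ (F.obj X) (F.obj Y) (F.obj X)).hom =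
      μ F (X ⊗ Y) X ≫ F.map (α_ X Y X).hom ≫ δ F X (Y ⊗ X) ≫ F.obj X ◁ δ F Y X := by
    rw [← Functor.OplaxMonoidal.associativity, ← Category.assoc, Functor.Monoidal.μ_δ,
      Category.id_comp]
  rw [comp_whiskerRight, comp_whiskerRight, MonoidalCategory.whiskerLeft_comp,
    MonoidalCategory.whiskerLeft_comp, Category.assoc, Category.assoc, reassoc_of% h1]
  slice_lhs 6 7 => rw [← MonoidalCategory.whiskerLeft_comp, Functor.Monoidal.δ_μ,
    MonoidalCategory.whiskerLeft_id]
  rw [Category.id_comp]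
  slice_lhs 2 3 => rw [μ_natural_left]
  slice_lhs 5 6 => rw [δ_natural_right]
  slice_lhs 4 5 => rw [← F.map_comp]
  slice_lhs 3 4 => rw [← F.map_comp]
  rw [ExactPairing.evaluation_coevaluation]
  rw [F.map_comp]
  slice_lhs 1 3 => rw [← Functor.LaxMonoidal.left_unitality]
  slice_lhs 2 4 => rw [← Functor.OplaxMonoidal.right_unitality]

lemma mapped_copair {X Y : C} [ExactPairing X Y] (h : 𝟙_ C ⟶ Y) :
    (λ_ (F.obj X)).inv ≫ (ε F ≫ F.map h) ▷ F.obj X ≫ μ F Y X ≫ F.map (ε_ X Y) ≫ η F =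
      F.map ((λ_ X).inv ≫ h ▷ X ≫ ε_ X Y) ≫ η F := by
  rw [comp_whiskerRight, Category.assoc]
  slice_lhs 3 4 => rw [μ_natural_left]
  have h2 : (λ_ (F.obj X)).inv ≫ ε F ▷ F.obj X ≫ μ F (𝟙_ C) X = F.map (λ_ X).inv := by
    rw [Iso.inv_comp_eq, Functor.LaxMonoidal.left_unitality,
      Category.assoc, Category.assoc, ← F.map_comp, Iso.hom_inv_id, F.map_id, Category.comp_id]
  slice_lhs 1 3 => rw [h2]
  simp only [← Category.assoc, ← F.map_comp]

end CatLemmas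

section FGHelpers

variable {k : Type u} [Field k]

/-- An isomorphism in `FGModuleCat k` from a linear equivalence of the carriers. -/
def FGIso {V W : FGModuleCat k} (e : V ≃ₗ[k] W) : V ≅ W where
  hom := ConcreteCategory.ofHom e.toLinearMap
  inv := ConcreteCategory.ofHom e.symm.toLinearMap
  hom_inv_id := by ext x; exact e.left_inv x
  inv_hom_id := by ext x; exact e.right_inv x

lemma FGIso_hom_apply {V W : FGModuleCat k} (e : V ≃ₗ[k] W) (v : V) :
    (FGIso e).hom v = e v := rfl

lemma hom_ext_span {V W : FGModuleCat k} {S : Set V} (hS : Submodule.span k S = ⊤)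
    {a b : V ⟶ W} (h : ∀ v ∈ S, a v = b v) : a = b :=
  ConcreteCategory.ext (LinearMap.ext_on hS h)

lemma span_tmul_top {V W : FGModuleCat k} (S : Set V) (T : Set W)
    (hS : Submodule.span k S = ⊤) (hT : Submodule.span k T = ⊤) :
    Submodule.span k {t : (V ⊗ W : FGModuleCat k) | ∃ m ∈ S, ∃ n ∈ T, t = m ⊗ₜ n} = ⊤ := by
  rw [eq_top_iff, ← TensorProduct.span_tmul_eq_top k V W, Submodule.span_le]
  rintro t ⟨m, n, rfl⟩
  have hm : m ∈ Submodule.span k S := by rw [hS]; trivial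
  have hn : n ∈ Submodule.span k T := by rw [hT]; trivial
  clear hS hT
  induction hm using Submodule.span_induction with
  | mem m hm =>
    induction hn using Submodule.span_induction with
    | mem n hn => exact Submodule.subset_span ⟨m, hm, n, hn, rfl⟩
    | zero => rw [TensorProduct.tmul_zero]; exact Submodule.zero_mem _
    | add x y _ _ hx hy => rw [TensorProduct.tmul_add]; exact Submodule.add_mem _ hx hy
    | smul c x _ hx => rw [TensorProduct.tmul_smul]; exact Submodule.smul_mem _ c hx
  | zero => rw [TensorProduct.zero_tmul]; exact Submodule.zero_mem _
  | add x y _ _ hx hy => rw [TensorProduct.add_tmul]; exact Submodule.add_mem _ hx hy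
  | smul c x _ hx => rw [← TensorProduct.smul_tmul']; exact Submodule.smul_mem _ c hx

end FGHelpers

section Elements

variable {k : Type u} [Field k] {M : Type u'} [Category.{v} M] [MonoidalCategory M]
  (F : M ⥤ FGModuleCat k) [F.Monoidal]

/-- The canonical generators `F.map f (ε_F 1)`. -/
noncomputable def genEl {X : M} (f : 𝟙_ M ⟶ X) : F.obj X :=
  F.map f (ε F (FGModuleCat.unitOne k))

lemma genEl_map {X Y : M} (f : 𝟙_ M ⟶ X) (u : X ⟶ Y) :
    F.map u (genEl F f) = genEl F (f ≫ u) := by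
  rw [genEl, genEl, F.map_comp]; rfl

lemma genEl_id : genEl F (𝟙 (𝟙_ M)) = ε F (FGModuleCat.unitOne k) := by
  rw [genEl, F.map_id]; rfl

/-- The family of linear functionals given by morphisms to the unit. -/
noncomputable def LL (X : M) : F.obj X →ₗ[k] ((X ⟶ 𝟙_ M) → 𝟙_ (FGModuleCat k)) where
  toFun x g := η F (F.map g x)
  map_add' x y := by funext g; simp [map_add]
  map_smul' c x := by funext g; simp [map_smul]

lemma LL_apply (X : M) (x : F.obj X) (g : X ⟶ 𝟙_ M) : LL F X x g = η F (F.map g x) := rfl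

lemma mu_genEl {X Y : M} (f : 𝟙_ M ⟶ X) (g : 𝟙_ M ⟶ Y) :
    μ F X Y (genEl F f ⊗ₜ genEl F g) = genEl F ((λ_ (𝟙_ M)).inv ≫ (f ⊗ₘ g)) := by
  have step1 : μ F (𝟙_ M) (𝟙_ M)
        (ε F (FGModuleCat.unitOne k) ⊗ₜ ε F (FGModuleCat.unitOne k)) =
      F.map (λ_ (𝟙_ M)).inv (ε F (FGModuleCat.unitOne k)) := by
    have h := ConcreteCategory.congr_hom (Functor.LaxMonoidal.left_unitality (F := F) (𝟙_ M))
      (FGModuleCat.unitOne k ⊗ₜ ε F (FGModuleCat.unitOne k))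
    have hl : (λ_ (F.obj (𝟙_ M))).hom
        (FGModuleCat.unitOne k ⊗ₜ ε F (FGModuleCat.unitOne k)) =
        ε F (FGModuleCat.unitOne k) := by
      show (1 : k) • (ε F (FGModuleCat.unitOne k)) = ε F (FGModuleCat.unitOne k)
      exact one_smul k _
    have hr : (ε F ▷ F.obj (𝟙_ M) ≫ μ F (𝟙_ M) (𝟙_ M) ≫ F.map (λ_ (𝟙_ M)).hom)
        (FGModuleCat.unitOne k ⊗ₜ ε F (FGModuleCat.unitOne k)) =
        F.map (λ_ (𝟙_ M)).hom (μ F (𝟙_ M) (𝟙_ M)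
          (ε F (FGModuleCat.unitOne k) ⊗ₜ ε F (FGModuleCat.unitOne k))) := rfl
    rw [hl, hr] at h
    have hz := ConcreteCategory.congr_hom
      (show F.map (λ_ (𝟙_ M)).hom ≫ F.map (λ_ (𝟙_ M)).inv = 𝟙 _ by
        rw [← F.map_comp, Iso.hom_inv_id, F.map_id])
      (μ F (𝟙_ M) (𝟙_ M) (ε F (FGModuleCat.unitOne k) ⊗ₜ ε F (FGModuleCat.unitOne k)))
    calc μ F (𝟙_ M) (𝟙_ M) (ε F (FGModuleCat.unitOne k) ⊗ₜ ε F (FGModuleCat.unitOne k))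
        = F.map (λ_ (𝟙_ M)).inv (F.map (λ_ (𝟙_ M)).hom (μ F (𝟙_ M) (𝟙_ M)
            (ε F (FGModuleCat.unitOne k) ⊗ₜ ε F (FGModuleCat.unitOne k)))) := hz.symm
      _ = F.map (λ_ (𝟙_ M)).inv (ε F (FGModuleCat.unitOne k)) := by rw [← h]
  have hnat := ConcreteCategory.congr_hom (Functor.LaxMonoidal.μ_natural (F := F) f g)
    (ε F (FGModuleCat.unitOne k) ⊗ₜ ε F (FGModuleCat.unitOne k))
  have hlhs : ((F.map f ⊗ₘ F.map g) ≫ μ F X Y)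
      (ε F (FGModuleCat.unitOne k) ⊗ₜ ε F (FGModuleCat.unitOne k)) =
      μ F X Y (genEl F f ⊗ₜ genEl F g) := rfl
  have hrhs : (μ F (𝟙_ M) (𝟙_ M) ≫ F.map (f ⊗ₘ g))
      (ε F (FGModuleCat.unitOne k) ⊗ₜ ε F (FGModuleCat.unitOne k)) =
      F.map (f ⊗ₘ g) (μ F (𝟙_ M) (𝟙_ M)
        (ε F (FGModuleCat.unitOne k) ⊗ₜ ε F (FGModuleCat.unitOne k))) := rfl
  rw [hlhs, hrhs, step1] at hnat
  rw [hnat]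
  exact genEl_map F (λ_ (𝟙_ M)).inv (f ⊗ₘ g)

end Elements

section Inj

variable {k : Type u} [Field k] {M : Type u'} [Category.{v} M] [MonoidalCategory M]
  [RigidCategory M] (F : M ⥤ FGModuleCat k) [F.Monoidal]

lemma LL_injective (hF : F.Nondegenerate) (X : M) : Function.Injective (LL F X) := by
  rw [injective_iff_map_eq_zero]
  intro x hx
  set ev' : F.obj (Xᘁ) ⊗ F.obj X ⟶ 𝟙_ (FGModuleCat k) :=
    μ F (Xᘁ) X ≫ F.map (ε_ X (Xᘁ)) ≫ η F with hev'
  have hev : ∀ b : F.obj (Xᘁ), ev' (b ⊗ₜ x) = 0 := by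
    intro b
    have hb : b ∈ Submodule.span k
        {v : F.obj (Xᘁ) | ∃ h : 𝟙_ M ⟶ Xᘁ, v = F.map h (ε F (FGModuleCat.unitOne k))} := by
      rw [hF (Xᘁ)]; trivial
    induction hb using Submodule.span_induction with
    | mem b hb =>
      obtain ⟨h, rfl⟩ := hb
      have hc := ConcreteCategory.congr_hom (mapped_copair F (X := X) h) x
      have lhs : ((λ_ (F.obj X)).inv ≫ (ε F ≫ F.map h) ▷ F.obj X ≫ μ F (Xᘁ) X ≫
          F.map (ε_ X (Xᘁ)) ≫ η F) x = ev' (F.map h (ε F (FGModuleCat.unitOne k)) ⊗ₜ x) := rfl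
      have rhs : (F.map ((λ_ X).inv ≫ h ▷ X ≫ ε_ X (Xᘁ)) ≫ η F) x
          = LL F X x ((λ_ X).inv ≫ h ▷ X ≫ ε_ X (Xᘁ)) := rfl
      rw [lhs, rhs, hx] at hc
      simpa using hc
    | zero => simp [TensorProduct.zero_tmul]
    | add b c _ _ hb hc => rw [TensorProduct.add_tmul, map_add, hb, hc, add_zero]
    | smul c b _ hb => rw [← TensorProduct.smul_tmul', map_smul, hb, smul_zero]
  have hz := ConcreteCategory.congr_hom (mapped_zigzag F X (Xᘁ)) (FGModuleCat.unitOne k ⊗ₜ x)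
  set T : TensorProduct k (F.obj X) (F.obj (Xᘁ)) :=
    (δ F X (Xᘁ)) (F.map (η_ X (Xᘁ)) (ε F (FGModuleCat.unitOne k))) with hT
  have lhs : ((ε F ≫ F.map (η_ X (Xᘁ)) ≫ δ F X (Xᘁ)) ▷ F.obj X ≫
      (α_ (F.obj X) (F.obj (Xᘁ)) (F.obj X)).hom ≫
      F.obj X ◁ (μ F (Xᘁ) X ≫ F.map (ε_ X (Xᘁ)) ≫ η F)) (FGModuleCat.unitOne k ⊗ₜ x)
      = (F.obj X ◁ ev') ((α_ (F.obj X) (F.obj (Xᘁ)) (F.obj X)).hom (T ⊗ₜ x)) := rfl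
  have key : ∀ t : TensorProduct k (F.obj X) (F.obj (Xᘁ)),
      (F.obj X ◁ ev') ((α_ (F.obj X) (F.obj (Xᘁ)) (F.obj X)).hom (t ⊗ₜ x)) = 0 := by
    intro t
    induction t using TensorProduct.induction_on with
    | zero => rw [TensorProduct.zero_tmul, map_zero, map_zero]
    | tmul a b =>
      have h1 : (α_ (F.obj X) (F.obj (Xᘁ)) (F.obj X)).hom ((a ⊗ₜ b) ⊗ₜ x) = a ⊗ₜ (b ⊗ₜ x) := rfl
      rw [h1]
      have h2 : (F.obj X ◁ ev') (a ⊗ₜ (b ⊗ₜ x)) = a ⊗ₜ ev' (b ⊗ₜ x) := rfl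
      rw [h2, hev, TensorProduct.tmul_zero]
    | add a b ha hb => rw [TensorProduct.add_tmul, map_add, map_add, ha, hb, add_zero]
  rw [lhs, key] at hz
  have rhs : ((λ_ (F.obj X)).hom ≫ (ρ_ (F.obj X)).inv) (FGModuleCat.unitOne k ⊗ₜ x)
      = x ⊗ₜ FGModuleCat.unitOne k := by
    have h1 : (λ_ (F.obj X)).hom (FGModuleCat.unitOne k ⊗ₜ x) = x := by
      show (1 : k) • x = x; exact one_smul k x
    show (ρ_ (F.obj X)).inv ((λ_ (F.obj X)).hom (FGModuleCat.unitOne k ⊗ₜ x)) = _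
    rw [h1]; rfl
  rw [rhs] at hz
  have h3 := congrArg (ρ_ (F.obj X)).hom hz
  rw [map_zero] at h3
  have h2 : (ρ_ (F.obj X)).hom (x ⊗ₜ FGModuleCat.unitOne k) = x := by
    show (1 : k) • x = x; exact one_smul k x
  rw [h2] at h3; exact h3.symm

end Inj

section Main

variable {k : Type u} [Field k] {M : Type u'} [Category.{v} M] [MonoidalCategory M]
  [RigidCategory M] (F G : M ⥤ FGModuleCat k) [F.Monoidal] [G.Monoidal]

omit [RigidCategory M] in
lemma LL_match
    (hunit : ∀ φ : 𝟙_ M ⟶ 𝟙_ M,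
      ε F ≫ F.map φ ≫ CategoryTheory.inv (ε F) = ε G ≫ G.map φ ≫ CategoryTheory.inv (ε G))
    {X : M} (f : 𝟙_ M ⟶ X) :
    LL F X (genEl F f) = LL G X (genEl G f) := by
  funext g
  have hF' : CategoryTheory.inv (ε F) = η F :=
    IsIso.inv_eq_of_hom_inv_id (Functor.Monoidal.ε_η F)
  have hG' : CategoryTheory.inv (ε G) = η G :=
    IsIso.inv_eq_of_hom_inv_id (Functor.Monoidal.ε_η G)
  have h3 := ConcreteCategory.congr_hom (hunit (f ≫ g)) (FGModuleCat.unitOne k)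
  rw [hF', hG'] at h3
  have h1 : LL F X (genEl F f) g
      = (ε F ≫ F.map (f ≫ g) ≫ η F) (FGModuleCat.unitOne k) := by
    rw [LL_apply, genEl, F.map_comp]; rfl
  have h2 : LL G X (genEl G f) g
      = (ε G ≫ G.map (f ≫ g) ≫ η G) (FGModuleCat.unitOne k) := by
    rw [LL_apply, genEl, G.map_comp]; rfl
  rw [h1, h2, h3]

lemma exists_transfer (hF : F.Nondegenerate)
    (hdim : ∀ X : M, Module.finrank k (G.obj X) ≤ Module.finrank k (F.obj X))
    (hunit : ∀ φ : 𝟙_ M ⟶ 𝟙_ M,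
      ε F ≫ F.map φ ≫ CategoryTheory.inv (ε F) = ε G ≫ G.map φ ≫ CategoryTheory.inv (ε G))
    (X : M) :
    ∃ φ : F.obj X ≃ₗ[k] G.obj X, ∀ f : 𝟙_ M ⟶ X, φ (genEl F f) = genEl G f := by
  classical
  set SF : Set (F.obj X) := {v | ∃ f : 𝟙_ M ⟶ X, v = genEl F f} with hSF
  set SG : Set (G.obj X) := {v | ∃ f : 𝟙_ M ⟶ X, v = genEl G f} with hSG
  have injF : Function.Injective (LL F X) := LL_injective F hF X
  have hspanF : Submodule.span k SF = ⊤ := hF X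
  set W : Submodule k (G.obj X) := Submodule.span k SG with hW
  have hmapeq : Submodule.map (LL G X) W = Submodule.map (LL F X) (Submodule.span k SF) := by
    rw [hW, Submodule.map_span, Submodule.map_span]
    congr 1
    ext w
    constructor
    · rintro ⟨v, ⟨f, rfl⟩, rfl⟩
      exact ⟨genEl F f, ⟨f, rfl⟩, (LL_match F G hunit f).symm ▸ rfl⟩
    · rintro ⟨v, ⟨f, rfl⟩, rfl⟩
      exact ⟨genEl G f, ⟨f, rfl⟩, (LL_match F G hunit f) ▸ rfl⟩
  have hrangeF : LinearMap.range (LL F X) = Submodule.map (LL F X) (Submodule.span k SF) := by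
    rw [hspanF, Submodule.map_top]
  have e1 : Module.finrank k (LinearMap.range (LL F X)) = Module.finrank k (F.obj X) := by
    have h4 := LinearMap.finrank_range_add_finrank_ker (LL F X)
    rw [LinearMap.ker_eq_bot.mpr injF, finrank_bot] at h4
    omega
  have c1 : Module.finrank k (F.obj X) ≤ Module.finrank k W := by
    rw [← e1, hrangeF, ← hmapeq]
    exact Submodule.finrank_map_le _ _
  have c2 : Module.finrank k W ≤ Module.finrank k (G.obj X) := Submodule.finrank_le W
  have hWeq : Module.finrank k W = Module.finrank k (G.obj X) := le_antisymm c2 (by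
    calc Module.finrank k (G.obj X) ≤ Module.finrank k (F.obj X) := hdim X
    _ ≤ Module.finrank k W := c1)
  have hWtop : W = ⊤ := Submodule.eq_top_of_finrank_eq (by simpa using hWeq)
  have hrangeG : LinearMap.range (LL G X) = LinearMap.range (LL F X) := by
    rw [hrangeF, ← hmapeq, hWtop, Submodule.map_top]
  have hdim_eq : Module.finrank k (G.obj X) = Module.finrank k (F.obj X) :=
    le_antisymm (hdim X) (le_trans c1 c2)
  have injG : Function.Injective (LL G X) := by
    rw [← LinearMap.ker_eq_bot]
    have h5 := LinearMap.finrank_range_add_finrank_ker (LL G X)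
    rw [hrangeG, e1, ← hdim_eq] at h5
    have h6 : Module.finrank k (LinearMap.ker (LL G X)) = 0 := by omega
    exact Submodule.finrank_eq_zero.mp h6
  set φ : F.obj X ≃ₗ[k] G.obj X :=
    (LinearEquiv.ofInjective (LL F X) injF).trans
      ((LinearEquiv.ofEq _ _ hrangeG.symm).trans
        (LinearEquiv.ofInjective (LL G X) injG).symm) with hφ
  have key : ∀ x : F.obj X, LL G X (φ x) = LL F X x := by
    intro x
    have h6 : (LinearEquiv.ofInjective (LL G X) injG) (φ x)
        = (LinearEquiv.ofEq _ _ hrangeG.symm) ((LinearEquiv.ofInjective (LL F X) injF) x) := by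
      rw [hφ]; simp
    have h7 := congrArg Subtype.val h6
    simpa using h7
  refine ⟨φ, fun f => injG ?_⟩
  rw [key, LL_match F G hunit f]

end Main

end TQFTCompare

open TQFTCompare

/-- There is a unique monoidal natural isomorphism between monoidal functors
`F, G : M ⥤ FGModuleCat k` (with `M` rigid monoidal), provided that `F` is
non-degenerate, `dim F(X) ≥ dim G(X)` for all `X`, and `F`, `G` agree on
endomorphisms of the tensor unit. -/
theorem existsUnique_monoidalNatIso
    {k : Type u} [Field k] {M : Type u'} [Category.{v} M] [MonoidalCategory M]
    [RigidCategory M]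
    (F G : M ⥤ FGModuleCat k) [F.Monoidal] [G.Monoidal]
    (hF : F.Nondegenerate)
    (hdim : ∀ X : M, Module.finrank k (G.obj X) ≤ Module.finrank k (F.obj X))
    (hunit : ∀ φ : 𝟙_ M ⟶ 𝟙_ M,
      ε F ≫ F.map φ ≫ inv (ε F) = ε G ≫ G.map φ ≫ inv (ε G)) :
    ∃! e : F ≅ G, NatTrans.IsMonoidal e.hom := by
  classical
  choose φ hφ using exists_transfer F G hF hdim hunit
  set e : F ≅ G := NatIso.ofComponents (fun X => FGIso (φ X)) (fun {X Y} u => by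
    refine hom_ext_span (hF X) ?_
    rintro v ⟨f, rfl⟩
    show (FGIso (φ Y)).hom (F.map u (genEl F f)) = G.map u ((FGIso (φ X)).hom (genEl F f))
    rw [FGIso_hom_apply, FGIso_hom_apply, genEl_map, hφ, hφ, genEl_map]) with he
  have happ : ∀ (X : M) (f : 𝟙_ M ⟶ X), e.hom.app X (genEl F f) = genEl G f := by
    intro X f
    show (FGIso (φ X)).hom (genEl F f) = genEl G f
    rw [FGIso_hom_apply, hφ]
  have hmon : NatTrans.IsMonoidal e.hom := by
    constructor
    · have h1 : (ε F ≫ e.hom.app (𝟙_ M)) (FGModuleCat.unitOne k)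
          = ε G (FGModuleCat.unitOne k) := by
        show e.hom.app (𝟙_ M) (ε F (FGModuleCat.unitOne k)) = _
        rw [← genEl_id F, happ, genEl_id G]
      exact ConcreteCategory.ext (LinearMap.ext_ring h1)
    · intro X Y
      refine hom_ext_span (span_tmul_top _ _ (hF X) (hF Y)) ?_
      rintro t ⟨m, ⟨f, rfl⟩, n, ⟨g, rfl⟩, rfl⟩
      show e.hom.app (X ⊗ Y) (μ F X Y (genEl F f ⊗ₜ genEl F g))
        = μ G X Y ((e.hom.app X ⊗ₘ e.hom.app Y) (genEl F f ⊗ₜ genEl F g))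
      have h1 : (e.hom.app X ⊗ₘ e.hom.app Y) (genEl F f ⊗ₜ genEl F g)
          = genEl G f ⊗ₜ genEl G g := by
        show e.hom.app X (genEl F f) ⊗ₜ e.hom.app Y (genEl F g) = _
        rw [happ, happ]
      rw [mu_genEl F f g, happ, h1, mu_genEl G f g]
  refine ⟨e, hmon, ?_⟩
  rintro e' he'
  apply Iso.ext
  apply NatTrans.ext
  funext X
  refine hom_ext_span (hF X) ?_
  rintro v ⟨f, rfl⟩
  have hu := ConcreteCategory.congr_hom he'.unit (FGModuleCat.unitOne k)
  have hu' : e'.hom.app (𝟙_ M) (ε F (FGModuleCat.unitOne k)) = ε G (FGModuleCat.unitOne k) := hu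
  have hnat := ConcreteCategory.congr_hom (e'.hom.naturality f) (ε F (FGModuleCat.unitOne k))
  calc e'.hom.app X (genEl F f)
      = G.map f (e'.hom.app (𝟙_ M) (ε F (FGModuleCat.unitOne k))) := by exact hnat
    _ = G.map f (ε G (FGModuleCat.unitOne k)) := by rw [hu']
    _ = genEl G f := rfl
    _ = e.hom.app X (genEl F f) := (happ X f).symm
end
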